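/- Let F ∈ K[x_0,...,x_n]_d admit a decomposition F = Σ_{i=1}^h λ_i L_i^d with the linear forms L_i pairwise non-proportional, and let H^s_{∂F} ⊂ P(K[x_0,...,x_n]_{d-s}) denote the projectivized span of the order-s partial derivatives of F. If the polynomials L_1^s,...,L_h^s span K[x_0,...,x_n]_s (equivalently, each hyperplane H_i = {⟨L_i^s, ξ⟩ = 0} in the coordinate space of H^s_{∂F} is well-defined and the collection {H_1,...,H_h} is a hyperplane arrangement), then every codimension-c intersection H_{i_1} ∩ ... ∩ H_{i_c} of c distinct hyperplanes from this collection corresponds to derivatives D^s_ξ(F) lying in the span of at most h - c of the powers L_i^{d-s}; in particular the codimension-c star configuration S_c({H_1,...,H_h}, H^s_{∂F}) is contained in H^s_{∂F} ∩ Sec_{h-c}(V^n_{d-s}). -/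

import Mathlib

open MvPolynomial

/-- The iterated partial derivative operator associated to a multi-index `σ`. -/
noncomputable def pd (K : Type) [CommSemiring K] {m : ℕ} (σ : Fin m → ℕ) :
    Module.End K (MvPolynomial (Fin m) K) :=
  (List.ofFn (fun j : Fin m =>
    ((MvPolynomial.pderiv (R := K) j).toLinearMap ^ (σ j) :
      Module.End K (MvPolynomial (Fin m) K)))).prod

/-- The linear form with coefficient vector `a`. -/
noncomputable def lform {K : Type} [CommSemiring K] {m : ℕ} (a : Fin m → K) :
    MvPolynomial (Fin m) K :=
  ∑ j, MvPolynomial.C (a j) * MvPolynomial.X j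

lemma pderiv_lform {K : Type} [CommSemiring K] {m : ℕ} (a : Fin m → K) (j : Fin m) :
    MvPolynomial.pderiv j (lform a) = MvPolynomial.C (a j) := by
  simp [lform, pderiv_X, Pi.single_apply]

lemma pderiv_pow_lform {K : Type} [CommSemiring K] {m : ℕ} (a : Fin m → K) (j : Fin m)
    (k e : ℕ) :
    ((MvPolynomial.pderiv (R := K) j).toLinearMap ^ k) ((lform a) ^ e)
      = ((e.descFactorial k : K) * a j ^ k) • (lform a) ^ (e - k) := by
  induction k with
  | zero => simp
  | succ k ih =>
    rw [pow_succ', Module.End.mul_apply, ih, map_smul]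
    have : (MvPolynomial.pderiv (R := K) j).toLinearMap ((lform a) ^ (e - k))
        = ((e - k : ℕ) : K) • (a j • (lform a) ^ (e - k - 1)) := by
      show MvPolynomial.pderiv j ((lform a) ^ (e - k)) = _
      rw [(pderiv j).leibniz_pow, pderiv_lform]
      simp [smul_eq_C_mul, Nat.cast_smul_eq_nsmul]
      ring
    rw [this, Nat.descFactorial_succ, Nat.cast_mul, smul_smul, smul_smul]
    rw [show e - (k + 1) = e - k - 1 from by omega]
    ring_nf

lemma descadd (e S k : ℕ) :
    e.descFactorial (k + S) = (e - S).descFactorial k * e.descFactorial S := by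
  induction k with
  | zero => simp
  | succ k ih =>
    rw [show k + 1 + S = (k + S) + 1 from by omega, Nat.descFactorial_succ,
      Nat.descFactorial_succ, ih, show e - (k + S) = e - S - k from by omega]
    ring

lemma prod_pd_list {K : Type} [CommSemiring K] {m : ℕ} (a : Fin m → K)
    (l : List (Fin m × ℕ)) (e : ℕ) :
    (l.map fun p => ((MvPolynomial.pderiv (R := K) p.1).toLinearMap ^ p.2)).prod ((lform a) ^ e)
      = ((e.descFactorial (l.map Prod.snd).sum : K) * (l.map fun p => a p.1 ^ p.2).prod)
        • (lform a) ^ (e - (l.map Prod.snd).sum) := by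
  induction l with
  | nil => simp
  | cons p l ih =>
    simp only [List.map_cons, List.prod_cons, List.sum_cons, Module.End.mul_apply, ih,
      map_smul, pderiv_pow_lform]
    rw [smul_smul, descadd e (l.map Prod.snd).sum p.2,
      show e - (l.map Prod.snd).sum - p.2 = e - (p.2 + (l.map Prod.snd).sum) from by omega]
    congr 1
    push_cast
    ring

lemma pd_lform_pow {K : Type} [CommSemiring K] {m : ℕ} (a : Fin m → K) (σ : Fin m → ℕ)
    (e : ℕ) :
    pd K σ ((lform a) ^ e)
      = ((e.descFactorial (∑ j, σ j) : K) * ∏ j, a j ^ σ j) • (lform a) ^ (e - ∑ j, σ j) := by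
  have h := prod_pd_list a (List.ofFn fun j => (j, σ j)) e
  simpa [pd, List.map_ofFn, Function.comp_def, List.sum_ofFn, List.prod_ofFn] using h

/-- Star configurations in the space of derivatives: let `F = ∑ λ_i L_i^d` with the `L_i`
pairwise non-proportional, and assume the powers `L_i^s` span the degree-`s` homogeneous
component.  Then for every `c`-element subset `J` of the indices, each point `ξ` of the
codimension-`c` intersection `⋂_{j ∈ J} H_j` (where `H_j = {⟨L_j^s, ξ⟩ = 0}`) yields a
derivative `D^s_ξ(F)` lying in the span of the `h - c` powers `L_i^{d-s}`, `i ∉ J`; i.e. the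
codimension-`c` star configuration is contained in `H^s_{∂F} ∩ Sec_{h-c}(V^n_{d-s})`. -/
theorem stmt6 {K : Type} [Field K] [CharZero K] (n d s h : ℕ) (hs : 1 ≤ s) (hsd : s ≤ d)
    (lam : Fin h → K) (hlam : ∀ i, lam i ≠ 0)
    (α : Fin h → Fin (n + 1) → K)
    (F : MvPolynomial (Fin (n + 1)) K)
    (hdec : F = ∑ i : Fin h, lam i • (lform (α i)) ^ d)
    (hprop : ∀ i j : Fin h, i ≠ j → ∀ c : K, lform (α i) ≠ c • lform (α j))
    (hspan : MvPolynomial.homogeneousSubmodule (Fin (n + 1)) K s ≤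
      Submodule.span K (Set.range fun i : Fin h => (lform (α i)) ^ s))
    (c : ℕ) (hc : c ≤ h) (J : Finset (Fin h)) (hJ : J.card = c)
    (ξ : (Fin (n + 1) → ℕ) → K)
    (hξ : ∀ j ∈ J,
      ∑ σ ∈ Finset.Nat.antidiagonalTuple (n + 1) s, (∏ t, α j t ^ σ t) * ξ σ = 0) :
    (∑ σ ∈ Finset.Nat.antidiagonalTuple (n + 1) s, ξ σ • pd K σ F) ∈
      Submodule.span K ((fun i : Fin h => (lform (α i)) ^ (d - s)) '' {i | i ∉ J}) := by
  subst hdec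
  have key : ∀ σ ∈ Finset.Nat.antidiagonalTuple (n + 1) s,
      ξ σ • pd K σ (∑ i : Fin h, lam i • (lform (α i)) ^ d)
        = ∑ i : Fin h, (ξ σ * (lam i * ((d.descFactorial s : K) * ∏ t, α i t ^ σ t)))
            • (lform (α i)) ^ (d - s) := by
    intro σ hσ
    rw [Finset.Nat.mem_antidiagonalTuple] at hσ
    rw [map_sum, Finset.smul_sum]
    refine Finset.sum_congr rfl fun i _ => ?_
    rw [map_smul, pd_lform_pow, hσ, smul_smul, smul_smul, mul_assoc]
  rw [Finset.sum_congr rfl key, Finset.sum_comm]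
  refine Submodule.sum_mem _ fun i _ => ?_
  rw [← Finset.sum_smul]
  by_cases hi : i ∈ J
  · have h0 : (∑ σ ∈ Finset.Nat.antidiagonalTuple (n + 1) s,
        ξ σ * (lam i * ((d.descFactorial s : K) * ∏ t, α i t ^ σ t)))
          = lam i * (d.descFactorial s : K) *
            ∑ σ ∈ Finset.Nat.antidiagonalTuple (n + 1) s, (∏ t, α i t ^ σ t) * ξ σ := by
      rw [Finset.mul_sum]
      exact Finset.sum_congr rfl fun σ _ => by ring
    rw [h0, hξ i hi, mul_zero, zero_smul]
    exact Submodule.zero_mem _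
  · exact Submodule.smul_mem _ _ (Submodule.subset_span ⟨i, hi, rfl⟩)
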